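/- Let E, H, K, C be nonempty finite types, let Φ : Matrix (H × C) (H × C) ℂ →ₗ[ℂ] Matrix (K × C) (K × C) ℂ be a trace-preserving linear map, and let G : Matrix (E × (H × C)) (E × (H × C)) ℂ →ₗ[ℂ] Matrix (E × (K × C)) (E × (K × C)) ℂ be a linear map satisfying G (x ⊗ₖ y) = x ⊗ₖ Φ y for all x : Matrix E E ℂ and y : Matrix (H × C) (H × C) ℂ. Let τ : Matrix C C ℂ have τ.trace = 1, let ρ : Matrix (E × H) (E × H) ℂ, and let ρ̃ : Matrix (E × (H × C)) (E × (H × C)) ℂ be the reindexing of ρ ⊗ₖ τ along the associativity equivalence (E × H) × C ≃ E × (H × C). Then for all e e' : E, ∑ over pairs (k, c) : K × C of (G ρ̃) (e, (k, c)) (e', (k, c)) equals ∑ over h : H of ρ (e, h) (e', h). That is, discarding the entire output of the D-CTC interaction box is the same as discarding its entire input, for any bipartite extension by an ancilla E. -/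
import Mathlib


open scoped Kronecker

/-- Core of terminality of `DMix`: discarding the full output of the D-CTC
interaction box (with trace-preserving interaction `Φ` and any state `τ` of the
chronology-violating system) equals discarding its input, for any bipartite
extension by an ancilla `E`. -/
theorem dctc_discard_output_eq_discard_input {E H K C : Type*}
    [Fintype E] [Fintype H] [Fintype K] [Fintype C]
    [Nonempty E] [Nonempty H] [Nonempty K] [Nonempty C]
    (Φ : Matrix (H × C) (H × C) ℂ →ₗ[ℂ] Matrix (K × C) (K × C) ℂ)
    (hΦ : ∀ M : Matrix (H × C) (H × C) ℂ, (Φ M).trace = M.trace)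
    (G : Matrix (E × (H × C)) (E × (H × C)) ℂ →ₗ[ℂ] Matrix (E × (K × C)) (E × (K × C)) ℂ)
    (hG : ∀ (x : Matrix E E ℂ) (y : Matrix (H × C) (H × C) ℂ), G (x ⊗ₖ y) = x ⊗ₖ Φ y)
    (τ : Matrix C C ℂ) (hτ : τ.trace = 1)
    (ρ : Matrix (E × H) (E × H) ℂ) :
    ∀ e e' : E,
      ∑ p : K × C,
          (G ((Matrix.reindex (Equiv.prodAssoc E H C) (Equiv.prodAssoc E H C)) (ρ ⊗ₖ τ)))
            (e, p) (e', p) =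
        ∑ h : H, ρ (e, h) (e', h) := by
  classical
  have key : (Matrix.reindex (Equiv.prodAssoc E H C) (Equiv.prodAssoc E H C)) (ρ ⊗ₖ τ)
      = ∑ q : (E × H) × (E × H), ρ q.1 q.2 •
          (Matrix.single q.1.1 q.2.1 (1:ℂ) ⊗ₖ
            (Matrix.single q.1.2 q.2.2 (1:ℂ) ⊗ₖ τ)) := by
    ext ⟨a, b, c⟩ ⟨a', b', c'⟩
    simp [Matrix.single, Matrix.kroneckerMap_apply, Fintype.sum_prod_type,
      Matrix.sum_apply, Matrix.smul_apply, smul_eq_mul, mul_ite, ite_and,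
      Finset.sum_ite_eq, Finset.sum_ite_eq']
  intro e e'
  rw [key, map_sum]
  simp only [map_smul, hG, Matrix.sum_apply]
  rw [Finset.sum_comm]
  have tr : ∀ (h₁ h₂ : H), ∑ p : K × C, (Φ (Matrix.single h₁ h₂ (1:ℂ) ⊗ₖ τ)) p p
      = if h₁ = h₂ then 1 else 0 := by
    intro h₁ h₂
    have h2 : (Φ (Matrix.single h₁ h₂ (1:ℂ) ⊗ₖ τ)).trace
        = if h₁ = h₂ then 1 else 0 := by
      rw [hΦ, Matrix.trace_kronecker, hτ, mul_one]
      by_cases h : h₁ = h₂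
      · subst h; simp [Matrix.trace, Matrix.diag, Matrix.single]
      · simp only [Matrix.trace, Matrix.diag, Matrix.single, h, if_neg h]
        simp only [if_false]
        refine Finset.sum_eq_zero fun x _ => ?_
        simp only [Matrix.of_apply]
        rw [if_neg]
        rintro ⟨rfl, rfl⟩
        exact h rfl
    simpa [Matrix.trace, Matrix.diag] using h2
  calc ∑ q : (E × H) × (E × H), ∑ p : K × C,
        ρ q.1 q.2 • ((Matrix.single q.1.1 q.2.1 (1:ℂ) ⊗ₖ
          Φ (Matrix.single q.1.2 q.2.2 (1:ℂ) ⊗ₖ τ)) (e, p) (e', p))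
      = ∑ q : (E × H) × (E × H), ρ q.1 q.2 *
          ((Matrix.single q.1.1 q.2.1 (1:ℂ)) e e' *
            if q.1.2 = q.2.2 then 1 else 0) := by
        refine Finset.sum_congr rfl fun q _ => ?_
        simp only [smul_eq_mul, Matrix.kroneckerMap_apply, ← Finset.mul_sum, ← tr]
    _ = ∑ h : H, ρ (e, h) (e', h) := by
        simp [Matrix.single, Fintype.sum_prod_type, mul_ite, ite_and,
          Finset.sum_ite_eq, Finset.sum_ite_eq']
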